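/- Assume Criterion 1 holds. Then the sparsity pattern S_A of the partial Jacobian J_A is generically invertible; that is, there exists an invertible (2N+1)×(2N+1) real matrix conforming to S_A. -/

import Mathlib

open Matrix

/-- The adjacency-plus-diagonal pattern of the grid: `(n, m) ∈ P` iff `n = m`
or `{n, m}` is an edge of the tree `T`. -/
def BusP {N : ℕ} (T : SimpleGraph (Fin (N + 1))) (n m : Fin (N + 1)) : Prop :=
  n = m ∨ T.Adj n m

/-- Column indices of the (single-time) Jacobian pattern: `Sum.inl n` is the
column `r_n` (real voltage part of bus `n`, `n ∈ {0, …, N}`), and `Sum.inr j`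
is the column `i_{j+1}` (imaginary voltage part of bus `j+1`; `i_0` is omitted
since the substation angle is fixed). -/
abbrev JCol (N : ℕ) := Fin (N + 1) ⊕ Fin N

/-- The bus a column refers to. -/
def colBus {N : ℕ} : JCol N → Fin (N + 1)
  | Sum.inl n => n
  | Sum.inr j => j.succ

/-- A magnitude row for bus `n` may be nonzero only in columns `r_n` and
(if `n ≠ 0`) `i_n`. -/
def AllowedMag {N : ℕ} (n : Fin (N + 1)) (c : JCol N) : Prop :=
  colBus c = n

/-- A power row for bus `n` may be nonzero only in the columns `r_m`, `i_m`
over all `m` with `(n, m) ∈ P`. -/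
def AllowedPow {N : ℕ} (T : SimpleGraph (Fin (N + 1))) (n : Fin (N + 1))
    (c : JCol N) : Prop :=
  BusP T n (colBus c)

/-- Row indices of the pattern `S_A`: one magnitude row for each
`n ∈ {0} ∪ M`, one reactive-power row and one active-power row for each
`n ∈ C ∪ M`, and one (coupled) active-power row for each `n ∈ O`. -/
abbrev RowA {N : ℕ} (M O C : Finset (Fin (N + 1))) :=
  ({x // x ∈ insert (0 : Fin (N + 1)) M}) ⊕
    (({x // x ∈ C ∪ M}) ⊕ (({x // x ∈ C ∪ M}) ⊕ ({x // x ∈ O})))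

/-- The sparsity pattern `S_A` of the partial Jacobian `J_A`, as the predicate
telling which entries are allowed to be nonzero. -/
def AllowedA {N : ℕ} (T : SimpleGraph (Fin (N + 1))) (M O C : Finset (Fin (N + 1))) :
    RowA M O C → JCol N → Prop
  | Sum.inl n => AllowedMag n.val
  | Sum.inr (Sum.inl n) => AllowedPow T n.val
  | Sum.inr (Sum.inr (Sum.inl n)) => AllowedPow T n.val
  | Sum.inr (Sum.inr (Sum.inr n)) => AllowedPow T n.val

/-- **Criterion 1** of the paper: there exists a family of pairwise
vertex-disjoint paths of the tree induced by `T` on `{1, …, N}` (i.e., paths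
of `T` avoiding the substation `0`), one path for each node of `O`, each
starting at that node of `O` and ending at a node of `M`. -/
def Criterion1 {N : ℕ} (T : SimpleGraph (Fin (N + 1))) (M O : Finset (Fin (N + 1))) : Prop :=
  ∃ P : Fin (N + 1) → List (Fin (N + 1)),
    (∀ o ∈ O, (P o).Nodup ∧ (P o).Chain' T.Adj ∧ (0 : Fin (N + 1)) ∉ P o ∧
      (P o).head? = some o ∧ ∃ mEnd ∈ M, (P o).getLast? = some mEnd) ∧
    ∀ o ∈ O, ∀ o' ∈ O, o ≠ o' → ∀ v ∈ P o, v ∉ P o'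

/-- **Lemma 4 of the paper.**  Let `T` be a tree on `{0, 1, …, N}` whose
substation vertex `0` is a leaf, and let `{1, …, N}` be partitioned into
metered buses `M`, non-metered buses `O`, and conventional buses `C`, with
`|M| = |O|`.  If Criterion 1 holds, then the `(2N+1) × (2N+1)` sparsity
pattern `S_A` of the partial Jacobian `J_A` is generically invertible: some
real matrix conforming to `S_A` has a two-sided inverse. -/
theorem stmt11 {N : ℕ} (T : SimpleGraph (Fin (N + 1))) (hT : T.IsTree)
    (hleaf : ∃! v, T.Adj 0 v)
    (M O C : Finset (Fin (N + 1)))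
    (hMO : Disjoint M O) (hMC : Disjoint M C) (hOC : Disjoint O C)
    (hcover : M ∪ O ∪ C = Finset.univ \ {0})
    (hcard : M.card = O.card)
    (hcrit : Criterion1 T M O) :
    ∃ X : Matrix (RowA M O C) (JCol N) ℝ,
      (∀ r c, X r c ≠ 0 → AllowedA T M O C r c) ∧
      ∃ Y : Matrix (JCol N) (RowA M O C) ℝ, X * Y = 1 ∧ Y * X = 1 := by
  classical
  obtain ⟨P, hP1, hP2⟩ := hcrit
  -- Basic membership facts
  have hCMmem : ∀ n ∈ C ∪ M, n ∈ Finset.univ \ ({0} : Finset (Fin (N+1))) := by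
    intro n hn
    rw [← hcover]
    rcases Finset.mem_union.mp hn with h | h
    · exact Finset.mem_union_right _ h
    · exact Finset.mem_union_left _ (Finset.mem_union_left _ h)
  have hCM0 : ∀ n ∈ C ∪ M, n ≠ (0 : Fin (N+1)) := by
    intro n hn
    simpa using (Finset.mem_sdiff.mp (hCMmem n hn)).2
  have hO0 : ∀ o ∈ O, o ≠ (0 : Fin (N+1)) := by
    intro o ho
    have : o ∈ Finset.univ \ ({0} : Finset (Fin (N+1))) := by
      rw [← hcover]
      exact Finset.mem_union_left _ (Finset.mem_union_right _ ho)
    simpa using (Finset.mem_sdiff.mp this).2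
  have hOCM : ∀ n ∈ C ∪ M, n ∉ O := by
    intro n hn hO
    rcases Finset.mem_union.mp hn with h | h
    · exact (Finset.disjoint_left.mp hOC) hO h
    · exact (Finset.disjoint_left.mp hMO) h hO
  have h0M : (0 : Fin (N+1)) ∉ M := by
    intro h
    exact hCM0 0 (Finset.mem_union_right _ h) rfl
  -- Path facts
  have hOinj : ∀ o ∈ O, ∀ o' ∈ O, ∀ v, v ∈ P o → v ∈ P o' → o = o' := by
    intro o ho o' ho' v hv hv'
    by_contra h
    exact hP2 o ho o' ho' h v hv hv'
  -- The "predecessor on a path" relation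
  set Q : Fin (N+1) → Fin (N+1) → Prop := fun n u =>
    ∃ o ∈ O, ∃ i : ℕ, ∃ h : i + 1 < (P o).length,
      (P o).get ⟨i, Nat.lt_of_succ_lt h⟩ = u ∧ (P o).get ⟨i+1, h⟩ = n with hQdef
  have hQex : ∀ o ∈ O, ∀ n, n ∈ P o → n ≠ o → ∃ u, Q n u := by
    intro o ho n hn hne
    obtain ⟨⟨j, hj⟩, hget⟩ := List.mem_iff_get.mp hn
    obtain ⟨t, ht⟩ := List.head?_eq_some_iff.mp (hP1 o ho).2.2.2.1
    have hj0 : j ≠ 0 := by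
      intro h
      apply hne
      rw [← hget]
      simp [ht, h]
    have hjj : j - 1 + 1 < (P o).length := by omega
    refine ⟨(P o).get ⟨j - 1, Nat.lt_of_succ_lt hjj⟩, o, ho, j - 1, hjj, rfl, ?_⟩
    have hjeq : (⟨j - 1 + 1, hjj⟩ : Fin (P o).length) = ⟨j, hj⟩ := by
      apply Fin.ext
      show j - 1 + 1 = j
      omega
    rw [hjeq]
    exact hget
  have hQmem : ∀ n u, Q n u → ∃ o ∈ O, u ∈ P o ∧ n ∈ P o := by
    rintro n u ⟨o, ho, i, h, hu, hn⟩
    exact ⟨o, ho, hu ▸ List.get_mem _ _, hn ▸ List.get_mem _ _⟩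
  have hQ0 : ∀ n u, Q n u → u ≠ 0 := by
    intro n u hq h
    obtain ⟨o, ho, hu, _⟩ := hQmem n u hq
    exact (hP1 o ho).2.2.1 (h ▸ hu)
  have hQadj : ∀ n u, Q n u → T.Adj u n := by
    rintro n u ⟨o, ho, i, h, hu, hn⟩
    have := List.isChain_iff_getElem.mp (hP1 o ho).2.1 i (by omega)
    simp only [List.get_eq_getElem] at hu hn
    rwa [hu, hn] at this
  have hQuniq : ∀ n u u', Q n u → Q n u' → u = u' := by
    rintro n u u' ⟨o, ho, i, h, hu, hn⟩ ⟨o', ho', i', h', hu', hn'⟩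
    have hoo : o = o' :=
      hOinj o ho o' ho' n (hn ▸ List.get_mem _ _) (hn' ▸ List.get_mem _ _)
    subst hoo
    have : (⟨i+1, h⟩ : Fin (P o).length) = ⟨i'+1, h'⟩ :=
      ((hP1 o ho).1.get_inj_iff).mp (by rw [hn, hn'])
    have hii : i = i' := by
      have := Fin.mk.injEq _ _ _ _ ▸ this
      omega
    subst hii
    rw [← hu, ← hu']
  have hQsucc : ∀ u n n', Q n u → Q n' u → n = n' := by
    rintro u n n' ⟨o, ho, i, h, hu, hn⟩ ⟨o', ho', i', h', hu', hn'⟩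
    have hoo : o = o' :=
      hOinj o ho o' ho' u (hu ▸ List.get_mem _ _) (hu' ▸ List.get_mem _ _)
    subst hoo
    have : (⟨i, Nat.lt_of_succ_lt h⟩ : Fin (P o).length) = ⟨i', Nat.lt_of_succ_lt h'⟩ :=
      ((hP1 o ho).1.get_inj_iff).mp (by rw [hu, hu'])
    have hii : i = i' := by
      have := Fin.mk.injEq _ _ _ _ ▸ this
      omega
    subst hii
    rw [← hn, ← hn']
  -- every metered bus is the endpoint of some path
  have hMend : ∀ m ∈ M, ∃ o ∈ O, (P o).getLast? = some m := by
    choose f hf1 hf2 using fun o (ho : o ∈ O) => (hP1 o ho).2.2.2.2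
    intro m hm
    have hsurj := Finset.surj_on_of_inj_on_of_card_le (s := O) (t := M) f hf1
      (fun a₁ a₂ ha₁ ha₂ hfe => by
        refine hOinj a₁ ha₁ a₂ ha₂ (f a₁ ha₁) ?_ ?_
        · exact List.mem_of_mem_getLast? (Option.mem_def.mpr (hf2 a₁ ha₁))
        · exact hfe ▸ List.mem_of_mem_getLast? (Option.mem_def.mpr (hf2 a₂ ha₂)))
      (le_of_eq hcard) m hm
    obtain ⟨o, ho, hfo⟩ := hsurj
    exact ⟨o, ho, hfo ▸ hf2 o ho⟩
  have hMlast : ∀ m ∈ M, ∀ o ∈ O, m ∈ P o → (P o).getLast? = some m := by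
    intro m hm o ho hmo
    obtain ⟨o', ho', hlast⟩ := hMend m hm
    have hm' : m ∈ P o' := List.mem_of_mem_getLast? (Option.mem_def.mpr hlast)
    have := hOinj o ho o' ho' m hmo hm'
    subst this
    exact hlast
  have hQnotM : ∀ n u, Q n u → u ∉ M := by
    rintro n u ⟨o, ho, i, h, hu, hn⟩ hM
    have hmem : u ∈ P o := hu ▸ List.get_mem _ _
    have hlast := hMlast u hM o ho hmem
    have hne : P o ≠ [] := by
      intro hnil
      rw [hnil] at hmem
      simp at hmem
    rw [List.getLast?_eq_getLast_of_ne_nil hne] at hlast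
    have hgl : (P o).get ⟨(P o).length - 1, by omega⟩ = u := by
      rw [List.get_eq_getElem, ← List.getLast_eq_getElem hne]
      exact Option.some.inj hlast
    have : (⟨i, Nat.lt_of_succ_lt h⟩ : Fin (P o).length) = ⟨(P o).length - 1, by omega⟩ :=
      ((hP1 o ho).1.get_inj_iff).mp (by rw [hu, hgl])
    have := Fin.mk.injEq _ _ _ _ ▸ this
    omega
  have hMQ : ∀ m ∈ M, ∃ u, Q m u := by
    intro m hm
    obtain ⟨o, ho, hlast⟩ := hMend m hm
    have hmem : m ∈ P o := List.mem_of_mem_getLast? (Option.mem_def.mpr hlast)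
    refine hQex o ho m hmem ?_
    intro h
    exact hOCM m (Finset.mem_union_right _ hm) (h ▸ ho)
  -- cardinality
  have hNsum : M.card + O.card + C.card = N := by
    have hdisj : Disjoint (M ∪ O) C := Finset.disjoint_union_left.mpr ⟨hMC, hOC⟩
    have h1 : ((M ∪ O) ∪ C).card = (Finset.univ \ ({0} : Finset (Fin (N+1)))).card := by
      rw [hcover]
    rw [Finset.card_union_of_disjoint hdisj, Finset.card_union_of_disjoint hMO,
      Finset.card_sdiff_of_subset (Finset.subset_univ _), Finset.card_univ] at h1
    simpa using h1
  have hcardEq : Fintype.card (RowA M O C) = Fintype.card (JCol N) := by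
    have e1 : (insert (0 : Fin (N+1)) M).card = M.card + 1 :=
      Finset.card_insert_of_notMem h0M
    have e2 : (C ∪ M).card = C.card + M.card :=
      Finset.card_union_of_disjoint hMC.symm
    simp only [RowA, JCol, Fintype.card_sum, Fintype.card_coe, Fintype.card_fin, e1, e2]
    omega
  -- the bijection between rows and columns
  have hex : ∃ σ : RowA M O C → JCol N,
      (∀ r, AllowedA T M O C r (σ r)) ∧ Function.Bijective σ := by
    refine ⟨Sum.elim (fun n => Sum.inl n.1)
      (Sum.elim (fun n => Sum.inr (n.1.pred (hCM0 n.1 n.2)))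
        (Sum.elim
          (fun n => if h : ∃ u, Q n.1 u then Sum.inl (Classical.choose h) else Sum.inl n.1)
          (fun n => Sum.inr (n.1.pred (hO0 n.1 n.2))))), ?_, ?_⟩
    · rintro (⟨n, hn⟩ | ⟨n, hn⟩ | ⟨n, hn⟩ | ⟨n, hn⟩) <;>
        simp only [Sum.elim_inl, Sum.elim_inr]
      · exact rfl
      · exact Or.inl (Fin.succ_pred n (hCM0 n hn)).symm
      · split_ifs with h
        · have hq := Classical.choose_spec h
          exact Or.inr (hQadj n _ hq).symm
        · exact Or.inl rfl
      · exact Or.inl (Fin.succ_pred n (hO0 n hn)).symm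
    · rw [Fintype.bijective_iff_injective_and_card]
      refine ⟨?_, hcardEq⟩
      rintro (⟨n, hn⟩ | ⟨n, hn⟩ | ⟨n, hn⟩ | ⟨n, hn⟩)
        (⟨n', hn'⟩ | ⟨n', hn'⟩ | ⟨n', hn'⟩ | ⟨n', hn'⟩) heq <;>
        simp only [Sum.elim_inl, Sum.elim_inr] at heq
      -- mag / mag
      · obtain rfl : n = n' := Sum.inl.inj heq
        rfl
      -- mag / reactive : inl vs inr
      · exact absurd heq (by simp)
      -- mag / activeCM
      · exfalso
        split_ifs at heq with h
        · have hq := Classical.choose_spec h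
          rw [← Sum.inl.inj heq] at hq
          rcases Finset.mem_insert.mp hn with h0 | hM
          · exact hQ0 n' n hq h0
          · exact hQnotM n' n hq hM
        · obtain rfl : n = n' := Sum.inl.inj heq
          rcases Finset.mem_insert.mp hn with h0 | hM
          · exact hCM0 n hn' h0
          · exact h (hMQ n hM)
      -- mag / activeO : inl vs inr
      · exact absurd heq (by simp)
      -- reactive / mag
      · exact absurd heq (by simp)
      -- reactive / reactive
      · obtain rfl : n = n' := Fin.pred_inj.mp (Sum.inr.inj heq)
        rfl
      -- reactive / activeCM
      · split_ifs at heq <;> exact absurd heq (by simp)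
      -- reactive / activeO
      · exfalso
        obtain rfl : n = n' := Fin.pred_inj.mp (Sum.inr.inj heq)
        exact hOCM n hn hn'
      -- activeCM / mag
      · exfalso
        split_ifs at heq with h
        · have hq := Classical.choose_spec h
          rw [Sum.inl.inj heq] at hq
          rcases Finset.mem_insert.mp hn' with h0 | hM
          · exact hQ0 n n' hq h0
          · exact hQnotM n n' hq hM
        · obtain rfl : n = n' := Sum.inl.inj heq
          rcases Finset.mem_insert.mp hn' with h0 | hM
          · exact hCM0 n hn h0
          · exact h (hMQ n hM)
      -- activeCM / reactive
      · split_ifs at heq <;> exact absurd heq (by simp)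
      -- activeCM / activeCM
      · by_cases h : ∃ u, Q n u
        · rw [dif_pos h] at heq
          by_cases h' : ∃ u, Q n' u
          · rw [dif_pos h'] at heq
            have hq := Classical.choose_spec h
            have hq' := Classical.choose_spec h'
            rw [Sum.inl.inj heq] at hq
            obtain rfl : n = n' := hQsucc _ n n' hq hq'
            rfl
          · rw [dif_neg h'] at heq
            exfalso
            have hq := Classical.choose_spec h
            rw [Sum.inl.inj heq] at hq
            obtain ⟨o, ho, hu, _⟩ := hQmem n n' hq
            refine h' (hQex o ho n' hu ?_)
            intro hh
            exact hOCM n' hn' (hh ▸ ho)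
        · rw [dif_neg h] at heq
          by_cases h' : ∃ u, Q n' u
          · rw [dif_pos h'] at heq
            exfalso
            have hq' := Classical.choose_spec h'
            rw [← Sum.inl.inj heq] at hq'
            obtain ⟨o, ho, hu, _⟩ := hQmem n' n hq'
            refine h (hQex o ho n hu ?_)
            intro hh
            exact hOCM n hn (hh ▸ ho)
          · rw [dif_neg h'] at heq
            obtain rfl : n = n' := Sum.inl.inj heq
            rfl
      -- activeCM / activeO
      · split_ifs at heq <;> exact absurd heq (by simp)
      -- activeO / mag
      · exact absurd heq (by simp)
      -- activeO / reactive
      · exfalso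
        obtain rfl : n = n' := Fin.pred_inj.mp (Sum.inr.inj heq)
        exact hOCM n hn' hn
      -- activeO / activeCM
      · split_ifs at heq <;> exact absurd heq (by simp)
      -- activeO / activeO
      · obtain rfl : n = n' := Fin.pred_inj.mp (Sum.inr.inj heq)
        rfl
  obtain ⟨σ, hallow, hbij⟩ := hex
  refine ⟨(Equiv.ofBijective σ hbij).toPEquiv.toMatrix, ?_,
    (Equiv.ofBijective σ hbij).symm.toPEquiv.toMatrix, ?_, ?_⟩
  · intro r c hne
    have hc : c = σ r := by
      by_contra h
      apply hne
      rw [PEquiv.toMatrix_apply, Equiv.toPEquiv_apply, if_neg]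
      simp only [Option.mem_def, Option.some.injEq, Equiv.ofBijective_apply]
      exact fun hh => h hh.symm
    rw [hc]
    exact hallow r
  · rw [← PEquiv.toMatrix_trans, ← Equiv.toPEquiv_trans, Equiv.self_trans_symm,
      Equiv.toPEquiv_refl, PEquiv.toMatrix_refl]
  · rw [← PEquiv.toMatrix_trans, ← Equiv.toPEquiv_trans, Equiv.symm_trans_self,
      Equiv.toPEquiv_refl, PEquiv.toMatrix_refl]
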